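/- Let {a_1 mod d_1, ..., a_t mod d_t} be a CD congruence set. Then for every integer m > 1, the number of indices i in any subset S ⊆ {1, ..., t} such that gcd(d_i, d_j) = m for all distinct i, j ∈ S is at most m; that is, at most m of the moduli can have pairwise gcd equal to m. -/
import Mathlib


/-- In a CD congruence set `{a i mod d i : i < t}`, for every integer `m > 1`, any set
`S` of indices whose moduli have pairwise gcd equal to `m` has size at most `m`. -/
theorem CD_pairwise_gcd_card_le (t : ℕ) (d : Fin t → ℕ) (a : Fin t → ℤ)
    (hd : ∀ i, 1 < d i) (hinj : Function.Injective d)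
    (hCD : ∀ i j : Fin t, i ≠ j →
      (∃ x : ℤ, x ≡ a i [ZMOD (d i : ℤ)] ∧ x ≡ a j [ZMOD (d j : ℤ)]) →
      Nat.gcd (d i) (d j) = 1)
    (m : ℕ) (hm : 1 < m) (S : Finset (Fin t))
    (hS : ∀ i ∈ S, ∀ j ∈ S, i ≠ j → Nat.gcd (d i) (d j) = m) :
    S.card ≤ m := by
  haveI : NeZero m := ⟨by omega⟩
  have key : ∀ i ∈ S, ∀ j ∈ S,
      ((a i : ZMod m) = (a j : ZMod m)) → i = j := by
    intro i hi j hj hab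
    by_contra hne
    have hg : Nat.gcd (d i) (d j) = m := hS i hi j hj hne
    have hdvd : (m : ℤ) ∣ a i - a j := by
      have h := (ZMod.intCast_eq_intCast_iff (a i) (a j) m).mp hab
      exact Int.ModEq.dvd h.symm
    obtain ⟨k, hk⟩ := hdvd
    set di : ℤ := (d i : ℤ)
    set dj : ℤ := (d j : ℤ)
    set A : ℤ := Int.gcdA di dj
    set B : ℤ := Int.gcdB di dj
    have hbez : (m : ℤ) = di * A + dj * B := by
      have h1 : (Int.gcd di dj : ℤ) = di * A + dj * B := Int.gcd_eq_gcd_ab di dj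
      have h2 : Int.gcd di dj = m := by
        simpa [di, dj, Int.gcd_natCast_natCast] using hg
      rw [h2] at h1
      exact h1
    refine absurd (hCD i j hne ⟨a i - k * (di * A), ?_, ?_⟩) (by omega)
    · have : di ∣ (a i - k * (di * A)) - a i := ⟨-(k * A), by ring⟩
      exact (Int.modEq_iff_dvd.mpr (by simpa using this.neg_right)).symm.symm
    · have : dj ∣ (a i - k * (di * A)) - a j := by
        refine ⟨k * B, ?_⟩
        have : a i - a j = k * (di * A + dj * B) := by rw [← hbez]; linarith [hk]
        linarith [this]
      exact (Int.modEq_iff_dvd.mpr (by simpa using this.neg_right)).symm.symm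
  calc S.card ≤ (Finset.univ : Finset (ZMod m)).card :=
        Finset.card_le_card_of_injOn (fun i => (a i : ZMod m))
          (fun _ _ => Finset.mem_univ _) key
    _ = m := by simp [ZMod.card]
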